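/- Define, for an m×m complex matrix C, the quantity p(C) = min_{1 ≤ i ≤ m+1} ( (i−1)/m + σ_i(C) ) with the convention σ_{m+1}(C) = 0, where σ_1 ≥ … ≥ σ_m are the singular values. With D, Π as above (rank r, size N), for any N×N matrices A, B: p(A − B) ≥ (r/N) · p(R(A) − R(B)), where on the right p is computed with matrices of size r. -/

import Mathlib

open Matrix

/-- The `r×N` selection matrix `Π` with `Π_{k,j} = δ_{j, φ k}`. -/
def Pmat (N r : ℕ) (φ : Fin r → Fin N) : Matrix (Fin r) (Fin N) ℂ :=
  Matrix.of fun k j => if φ k = j then 1 else 0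

/-- The restriction operator `R(A) = Π A Πᵀ`. -/
noncomputable def Rop (N r : ℕ) (φ : Fin r → Fin N) (A : Matrix (Fin N) (Fin N) ℂ) :
    Matrix (Fin r) (Fin r) ℂ :=
  Pmat N r φ * A * (Pmat N r φ)ᵀ

/-- The singular values of a square complex matrix, listed in decreasing order. -/
noncomputable def sv {m : ℕ} (A : Matrix (Fin m) (Fin m) ℂ) : Fin m → ℝ :=
  fun i =>
    Real.sqrt ((Matrix.isHermitian_conjTranspose_mul_self A).eigenvalues
      (Tuple.sort (Matrix.isHermitian_conjTranspose_mul_self A).eigenvalues i.rev))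

/-- The a.c.s. modulus `p(C) = min_{1 ≤ i ≤ m+1} ((i−1)/m + σ_i(C))`, with the convention
`σ_{m+1}(C) = 0`, for an `m×m` complex matrix `C`. -/
noncomputable def acsP {m : ℕ} (C : Matrix (Fin m) (Fin m) ℂ) : ℝ :=
  ⨅ i : Fin (m + 1),
    (((i : ℕ) : ℝ) / m + if h : (i : ℕ) < m then sv C ⟨(i : ℕ), h⟩ else 0)

noncomputable section AuxACS

open Finset

namespace AuxACS

variable {n : ℕ}

def nsq {n : ℕ} (y : Fin n → ℂ) : ℝ := ∑ i, Complex.normSq (y i)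

def toEuc {n : ℕ} (y : Fin n → ℂ) : EuclideanSpace ℂ (Fin n) := WithLp.toLp 2 y

lemma nsq_nonneg (y : Fin n → ℂ) : 0 ≤ nsq y :=
  Finset.sum_nonneg fun _ _ => Complex.normSq_nonneg _

lemma nsq_eq_norm_sq (x : EuclideanSpace ℂ (Fin n)) : nsq (x : Fin n → ℂ) = ‖x‖^2 := by
  rw [EuclideanSpace.norm_eq, Real.sq_sqrt (by positivity)]
  unfold nsq
  congr 1; ext i
  rw [← Complex.sq_norm]

lemma nsq_pos {x : EuclideanSpace ℂ (Fin n)} (hx : x ≠ 0) : 0 < nsq (x : Fin n → ℂ) := by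
  rw [nsq_eq_norm_sq]
  exact pow_pos (norm_pos_iff.2 hx) 2

lemma star_dot_self (y : Fin n → ℂ) : star y ⬝ᵥ y = (nsq y : ℂ) := by
  unfold nsq
  push_cast
  unfold dotProduct
  refine Finset.sum_congr rfl fun i _ => ?_
  simp [Complex.normSq_eq_conj_mul_self]

lemma quad_eq_normsq {m : ℕ} (C : Matrix (Fin m) (Fin n) ℂ) (x : Fin n → ℂ) :
    star x ⬝ᵥ ((Cᴴ * C) *ᵥ x) = (nsq (C *ᵥ x) : ℂ) := by
  rw [← mulVec_mulVec, dotProduct_mulVec, ← star_mulVec, ← star_dot_self]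

lemma repr_mulVec {H : Matrix (Fin n) (Fin n) ℂ} (hH : H.IsHermitian)
    (x : EuclideanSpace ℂ (Fin n)) (j : Fin n) :
    hH.eigenvectorBasis.repr (WithLp.toLp 2 (H *ᵥ x)) j
      = (hH.eigenvalues j : ℂ) * hH.eigenvectorBasis.repr x j := by
  have key : (H *ᵥ x : Fin n → ℂ)
      = (∑ i, ((hH.eigenvalues i : ℂ) * hH.eigenvectorBasis.repr x i) • hH.eigenvectorBasis i :
          EuclideanSpace ℂ (Fin n)) := by
    have hx : (x : EuclideanSpace ℂ (Fin n))
        = ∑ i, hH.eigenvectorBasis.repr x i • hH.eigenvectorBasis i :=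
      (hH.eigenvectorBasis.sum_repr x).symm
    calc (H *ᵥ x : Fin n → ℂ)
        = H.mulVecLin (∑ i, hH.eigenvectorBasis.repr x i • (hH.eigenvectorBasis i : Fin n → ℂ)) := by
          rw [mulVecLin_apply]; exact congrArg _ ((congrArg WithLp.ofLp hx).trans (by simp [WithLp.ofLp_sum]))
      _ = ∑ i, hH.eigenvectorBasis.repr x i • H.mulVecLin (hH.eigenvectorBasis i : Fin n → ℂ) := by
          rw [map_sum]
          exact Finset.sum_congr rfl fun i _ => H.mulVecLin.map_smul _ _
      _ = ∑ i, ((hH.eigenvalues i : ℂ) * hH.eigenvectorBasis.repr x i) •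
            (hH.eigenvectorBasis i : Fin n → ℂ) := by
          refine Finset.sum_congr rfl fun i _ => ?_
          rw [mulVecLin_apply,
            show H *ᵥ (hH.eigenvectorBasis i : Fin n → ℂ)
                = hH.eigenvalues i • (hH.eigenvectorBasis i : Fin n → ℂ) from
              hH.mulVec_eigenvectorBasis i,
            RCLike.real_smul_eq_coe_smul (K := ℂ), smul_smul, mul_comm]
          rfl
    simp [WithLp.ofLp_sum]
  rw [show (WithLp.toLp 2 (H *ᵥ x) : EuclideanSpace ℂ (Fin n)) = _ from by rw [key], map_sum]
  simp only [_root_.map_smul, OrthonormalBasis.repr_self]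
  rw [WithLp.ofLp_sum, Fintype.sum_apply]
  simp [EuclideanSpace.single_apply]

lemma nsq_hermitian_expand {H : Matrix (Fin n) (Fin n) ℂ} (hH : H.IsHermitian)
    (x : EuclideanSpace ℂ (Fin n)) :
    nsq (x : Fin n → ℂ) = ∑ j, Complex.normSq (hH.eigenvectorBasis.repr x j) := by
  rw [nsq_eq_norm_sq, ← hH.eigenvectorBasis.repr.norm_map x,
    ← nsq_eq_norm_sq (hH.eigenvectorBasis.repr x)]
  rfl

lemma quad_expand {H : Matrix (Fin n) (Fin n) ℂ} (hH : H.IsHermitian)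
    (x : EuclideanSpace ℂ (Fin n)) :
    star (x : Fin n → ℂ) ⬝ᵥ (H *ᵥ x)
      = (↑(∑ j, hH.eigenvalues j * Complex.normSq (hH.eigenvectorBasis.repr x j)) : ℂ) := by
  have h1 : star (x : Fin n → ℂ) ⬝ᵥ (H *ᵥ x)
      = inner (𝕜 := ℂ) x (WithLp.toLp 2 (H *ᵥ x) : EuclideanSpace ℂ (Fin n)) := by
    rw [EuclideanSpace.inner_eq_star_dotProduct, dotProduct_comm]
  rw [h1, ← hH.eigenvectorBasis.repr.inner_map_map x (WithLp.toLp 2 (H *ᵥ x) : EuclideanSpace ℂ (Fin n))]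
  rw [PiLp.inner_apply]
  push_cast
  refine Finset.sum_congr rfl fun j _ => ?_
  rw [RCLike.inner_apply, repr_mulVec hH x j]
  rw [Complex.normSq_eq_conj_mul_self]
  push_cast
  ring

lemma repr_of_sum {d : ℕ} {H : Matrix (Fin n) (Fin n) ℂ} (hH : H.IsHermitian)
    (e : Fin d → Fin n) {c : Fin d → ℂ} {x : EuclideanSpace ℂ (Fin n)}
    (hx : ∑ a, c a • hH.eigenvectorBasis (e a) = x) {j : Fin n} (hj : ∀ a, e a ≠ j) :
    hH.eigenvectorBasis.repr x j = 0 := by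
  rw [← hx, map_sum]
  rw [WithLp.ofLp_sum, Fintype.sum_apply]
  simp only [_root_.map_smul, OrthonormalBasis.repr_self]
  simp only [PiLp.smul_apply, EuclideanSpace.single_apply, smul_eq_mul, mul_ite, mul_one, mul_zero]
  refine Finset.sum_eq_zero fun a _ => ?_
  rw [if_neg (fun h => hj a h.symm)]

lemma quad_le_of_rep {d : ℕ} {H : Matrix (Fin n) (Fin n) ℂ} (hH : H.IsHermitian)
    (e : Fin d → Fin n) {c : Fin d → ℂ} {x : EuclideanSpace ℂ (Fin n)} {t : ℝ}
    (hx : ∑ a, c a • hH.eigenvectorBasis (e a) = x)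
    (hc : ∀ a, hH.eigenvalues (e a) ≤ t) :
    (star (x : Fin n → ℂ) ⬝ᵥ (H *ᵥ x)).re ≤ t * nsq (x : Fin n → ℂ) := by
  classical
  rw [quad_expand hH x, Complex.ofReal_re, nsq_hermitian_expand hH x, Finset.mul_sum]
  refine Finset.sum_le_sum fun j _ => ?_
  by_cases hj : ∃ a, e a = j
  · obtain ⟨a, rfl⟩ := hj
    exact mul_le_mul_of_nonneg_right (hc a) (Complex.normSq_nonneg _)
  · push_neg at hj
    rw [repr_of_sum hH e hx hj]
    simp

lemma quad_ge_of_rep {d : ℕ} {H : Matrix (Fin n) (Fin n) ℂ} (hH : H.IsHermitian)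
    (e : Fin d → Fin n) {c : Fin d → ℂ} {x : EuclideanSpace ℂ (Fin n)} {t : ℝ}
    (hx : ∑ a, c a • hH.eigenvectorBasis (e a) = x)
    (hc : ∀ a, t ≤ hH.eigenvalues (e a)) :
    t * nsq (x : Fin n → ℂ) ≤ (star (x : Fin n → ℂ) ⬝ᵥ (H *ᵥ x)).re := by
  classical
  rw [quad_expand hH x, Complex.ofReal_re, nsq_hermitian_expand hH x, Finset.mul_sum]
  refine Finset.sum_le_sum fun j _ => ?_
  by_cases hj : ∃ a, e a = j
  · obtain ⟨a, rfl⟩ := hj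
    exact mul_le_mul_of_nonneg_right (hc a) (Complex.normSq_nonneg _)
  · push_neg at hj
    rw [repr_of_sum hH e hx hj]
    simp

variable {N r : ℕ} (φ : Fin r → Fin N)

lemma Pmat_t_conjTranspose : ((Pmat N r φ)ᵀ)ᴴ = Pmat N r φ := by
  ext k j
  simp [Pmat, conjTranspose_apply, apply_ite]

lemma Pmat_mul_t (hφ : Function.Injective φ) : Pmat N r φ * (Pmat N r φ)ᵀ = 1 := by
  ext k l
  simp only [mul_apply, transpose_apply, Pmat, of_apply, one_apply, ite_mul, one_mul, zero_mul]
  rw [Finset.sum_ite_eq Finset.univ (φ k) (fun j => if φ l = j then (1:ℂ) else 0)]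
  simp [eq_comm, hφ.eq_iff]

lemma dot_Pt (hφ : Function.Injective φ) (u v : Fin r → ℂ) :
    star ((Pmat N r φ)ᵀ *ᵥ u) ⬝ᵥ ((Pmat N r φ)ᵀ *ᵥ v) = star u ⬝ᵥ v := by
  rw [star_mulVec, Pmat_t_conjTranspose, ← dotProduct_mulVec, mulVec_mulVec,
    Pmat_mul_t φ hφ, one_mulVec]

lemma P_mulVec_Pt (hφ : Function.Injective φ) (u : Fin r → ℂ) :
    Pmat N r φ *ᵥ ((Pmat N r φ)ᵀ *ᵥ u) = u := by
  rw [mulVec_mulVec, Pmat_mul_t φ hφ, one_mulVec]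

lemma nsq_Pt (hφ : Function.Injective φ) (u : Fin r → ℂ) :
    nsq ((Pmat N r φ)ᵀ *ᵥ u) = nsq u := by
  have := dot_Pt φ hφ u u
  rw [star_dot_self, star_dot_self] at this
  exact_mod_cast this

lemma P_mulVec_apply (y : Fin N → ℂ) (k : Fin r) :
    (Pmat N r φ *ᵥ y) k = y (φ k) := by
  simp [Pmat, mulVec, dotProduct, ite_mul]

lemma nsq_P_le (hφ : Function.Injective φ) (y : Fin N → ℂ) :
    nsq (Pmat N r φ *ᵥ y) ≤ nsq y := by
  unfold nsq
  simp only [P_mulVec_apply]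
  have h1 : ∑ x : Fin r, Complex.normSq (y (φ x))
      = ∑ j ∈ Finset.univ.image φ, Complex.normSq (y j) :=
    (Finset.sum_image (g := φ) (f := fun j => Complex.normSq (y j)) (s := Finset.univ)
      (fun a _ b _ h => hφ h)).symm
  rw [h1]
  exact Finset.sum_le_sum_of_subset_of_nonneg (Finset.subset_univ _)
    (fun _ _ _ => Complex.normSq_nonneg _)

lemma orthonormal_Pt (hφ : Function.Injective φ) {ι : Type*} {w : ι → EuclideanSpace ℂ (Fin r)}
    (hw : Orthonormal ℂ w) :
    Orthonormal ℂ (fun a => toEuc ((Pmat N r φ)ᵀ *ᵥ (w a))) := by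
  classical
  rw [orthonormal_iff_ite] at hw ⊢
  intro i j
  have h := dot_Pt φ hφ (w i) (w j)
  have h2 : star ((w i : Fin r → ℂ)) ⬝ᵥ (w j : Fin r → ℂ) = if i = j then 1 else 0 := by
    rw [← hw i j, EuclideanSpace.inner_eq_star_dotProduct, dotProduct_comm]
  exact (EuclideanSpace.inner_eq_star_dotProduct _ _).trans ((dotProduct_comm _ _).trans (h.trans h2))

lemma mulVec_sum_smul {m n d : ℕ} (M : Matrix (Fin m) (Fin n) ℂ) (c : Fin d → ℂ)
    (v : Fin d → Fin n → ℂ) :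
    M *ᵥ (∑ a, c a • v a) = ∑ a, c a • (M *ᵥ v a) := by
  rw [← mulVecLin_apply, map_sum]
  exact Finset.sum_congr rfl fun a _ => M.mulVecLin.map_smul _ _

/-- Core interlacing: the `k`-th largest eigenvalue of `(ΠCΠᵀ)ᴴ(ΠCΠᵀ)` is at most the
`k`-th largest eigenvalue of `CᴴC`. -/
lemma eig_sub_le (hφ : Function.Injective φ) (C : Matrix (Fin N) (Fin N) ℂ)
    (k : ℕ) (hkr : k < r) (hkN : k < N) :
    (isHermitian_conjTranspose_mul_self (Pmat N r φ * C * (Pmat N r φ)ᵀ)).eigenvalues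
        (Tuple.sort (isHermitian_conjTranspose_mul_self
          (Pmat N r φ * C * (Pmat N r φ)ᵀ)).eigenvalues (Fin.rev ⟨k, hkr⟩))
      ≤ (isHermitian_conjTranspose_mul_self C).eigenvalues
        (Tuple.sort (isHermitian_conjTranspose_mul_self C).eigenvalues (Fin.rev ⟨k, hkN⟩)) := by
  classical
  set P := Pmat N r φ with hP
  set C' := P * C * Pᵀ with hC'
  set hH := isHermitian_conjTranspose_mul_self C with hhH
  set hH' := isHermitian_conjTranspose_mul_self C' with hhH'
  set μ := hH.eigenvalues with hμ
  set μ' := hH'.eigenvalues with hμ'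
  set s := Tuple.sort μ with hs
  set s' := Tuple.sort μ' with hs'
  set b := hH.eigenvectorBasis with hb
  set b' := hH'.eigenvectorBasis with hb'
  set t := μ' (s' (Fin.rev ⟨k, hkr⟩)) with ht
  set T := μ (s (Fin.rev ⟨k, hkN⟩)) with hT
  show t ≤ T
  have hNk : N - k ≤ N := Nat.sub_le N k
  set e₁ : Fin (N - k) → Fin N := fun a => s (Fin.castLE hNk a) with he₁
  set e₂ : Fin (k + 1) → Fin r := fun a => s' ⟨r - 1 - k + a, by omega⟩ with he₂
  have he₁inj : Function.Injective e₁ :=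
    s.injective.comp (Fin.castLE_injective hNk)
  have he₂inj : Function.Injective e₂ := by
    intro a a' h
    have h2 : r - 1 - k + (a : ℕ) = r - 1 - k + (a' : ℕ) :=
      congrArg Fin.val (s'.injective h)
    exact Fin.ext (by omega)
  have hμe₁ : ∀ a, μ (e₁ a) ≤ T := by
    intro a
    refine Tuple.monotone_sort μ ?_
    rw [Fin.le_def, Fin.val_rev, Fin.coe_castLE]
    simp only [Fin.val_mk]
    have := a.isLt
    omega
  have hμe₂ : ∀ a, t ≤ μ' (e₂ a) := by
    intro a
    refine Tuple.monotone_sort μ' ?_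
    rw [Fin.le_def, Fin.val_rev]
    simp only [Fin.val_mk]
    omega
  set f₁ : Fin (N - k) → EuclideanSpace ℂ (Fin N) := fun a => b (e₁ a) with hf₁
  set f₂ : Fin (k + 1) → EuclideanSpace ℂ (Fin N) := fun a => toEuc (Pᵀ *ᵥ (b' (e₂ a))) with hf₂
  have hon₁ : Orthonormal ℂ f₁ := b.orthonormal.comp e₁ he₁inj
  have hon₂ : Orthonormal ℂ f₂ := orthonormal_Pt φ hφ (b'.orthonormal.comp e₂ he₂inj)
  set S₁ := Submodule.span ℂ (Set.range f₁) with hS₁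
  set S₂ := Submodule.span ℂ (Set.range f₂) with hS₂
  have hd₁ : Module.finrank ℂ S₁ = N - k := by
    rw [hS₁, finrank_span_eq_card hon₁.linearIndependent, Fintype.card_fin]
  have hd₂ : Module.finrank ℂ S₂ = k + 1 := by
    rw [hS₂, finrank_span_eq_card hon₂.linearIndependent, Fintype.card_fin]
  have hsup : Module.finrank ℂ ↥(S₁ ⊔ S₂) ≤ N :=
    le_trans (Submodule.finrank_le _) (le_of_eq (finrank_euclideanSpace_fin))
  have hinfpos : 0 < Module.finrank ℂ ↥(S₁ ⊓ S₂) := by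
    have h := Submodule.finrank_sup_add_finrank_inf_eq S₁ S₂
    omega
  have hne : S₁ ⊓ S₂ ≠ ⊥ := by
    intro h
    rw [h, finrank_bot] at hinfpos
    omega
  obtain ⟨x, hx, hx0⟩ := Submodule.exists_mem_ne_zero_of_ne_bot hne
  obtain ⟨hxS₁, hxS₂⟩ := Submodule.mem_inf.1 hx
  obtain ⟨c₁, hc₁⟩ := (Submodule.mem_span_range_iff_exists_fun ℂ).1 hxS₁
  obtain ⟨c₂, hc₂⟩ := (Submodule.mem_span_range_iff_exists_fun ℂ).1 hxS₂
  set u : EuclideanSpace ℂ (Fin r) := ∑ a, c₂ a • b' (e₂ a) with hu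
  have hurep : ∑ a, c₂ a • b' (e₂ a) = u := rfl
  have hxu : (x : Fin N → ℂ) = Pᵀ *ᵥ (u : Fin r → ℂ) := by
    rw [show (u : Fin r → ℂ) = ∑ a, c₂ a • (b' (e₂ a) : Fin r → ℂ) from by simp [hu],
      mulVec_sum_smul, ← hc₂]
    simp [hf₂, toEuc]
  have hu0 : u ≠ 0 := by
    intro h
    apply hx0
    have hx' : (x : Fin N → ℂ) = 0 := by
      rw [hxu, h]
      exact mulVec_zero _
    exact (WithLp.ofLp_eq_zero 2).1 hx'
  have hnsqx : nsq (x : Fin N → ℂ) = nsq (u : Fin r → ℂ) := by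
    rw [hxu]; exact nsq_Pt φ hφ u
  have hup : (star (x : Fin N → ℂ) ⬝ᵥ ((Cᴴ * C) *ᵥ x)).re ≤ T * nsq (x : Fin N → ℂ) :=
    quad_le_of_rep hH e₁ hc₁ hμe₁
  have hlow : t * nsq (u : Fin r → ℂ) ≤ (star (u : Fin r → ℂ) ⬝ᵥ ((C'ᴴ * C') *ᵥ u)).re :=
    quad_ge_of_rep hH' e₂ hurep hμe₂
  have h2 : (star (x : Fin N → ℂ) ⬝ᵥ ((Cᴴ * C) *ᵥ x)).re = nsq (C *ᵥ (x : Fin N → ℂ)) := by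
    rw [quad_eq_normsq, Complex.ofReal_re]
  have h4 : (star (u : Fin r → ℂ) ⬝ᵥ ((C'ᴴ * C') *ᵥ u)).re
      = nsq (C' *ᵥ (u : Fin r → ℂ)) := by
    rw [quad_eq_normsq, Complex.ofReal_re]
  have h3 : nsq (C' *ᵥ (u : Fin r → ℂ)) ≤ nsq (C *ᵥ (x : Fin N → ℂ)) := by
    have hcc : C' *ᵥ (u : Fin r → ℂ) = P *ᵥ (C *ᵥ (x : Fin N → ℂ)) := by
      rw [hxu, mulVec_mulVec, mulVec_mulVec, hC']
    rw [hcc]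
    exact nsq_P_le φ hφ _
  have hfinal : t * nsq (x : Fin N → ℂ) ≤ T * nsq (x : Fin N → ℂ) := by
    rw [hnsqx]
    calc t * nsq (u : Fin r → ℂ) ≤ _ := hlow
      _ = nsq (C' *ᵥ (u : Fin r → ℂ)) := h4
      _ ≤ nsq (C *ᵥ (x : Fin N → ℂ)) := h3
      _ = (star (x : Fin N → ℂ) ⬝ᵥ ((Cᴴ * C) *ᵥ x)).re := h2.symm
      _ ≤ T * nsq (x : Fin N → ℂ) := hup
      _ = T * nsq (u : Fin r → ℂ) := by rw [hnsqx]
  exact le_of_mul_le_mul_right hfinal (nsq_pos hx0)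

lemma sv_restrict_le (hφ : Function.Injective φ) (C : Matrix (Fin N) (Fin N) ℂ)
    (k : ℕ) (hkr : k < r) (hkN : k < N) :
    sv (Pmat N r φ * C * (Pmat N r φ)ᵀ) ⟨k, hkr⟩ ≤ sv C ⟨k, hkN⟩ :=
  Real.sqrt_le_sqrt (eig_sub_le φ hφ C k hkr hkN)

lemma sv_nonneg {m : ℕ} (A : Matrix (Fin m) (Fin m) ℂ) (i : Fin m) : 0 ≤ sv A i :=
  Real.sqrt_nonneg _

lemma acsP_le {m : ℕ} (C : Matrix (Fin m) (Fin m) ℂ) (i : Fin (m + 1)) :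
    acsP C ≤ ((i : ℕ) : ℝ) / m + if h : (i : ℕ) < m then sv C ⟨(i : ℕ), h⟩ else 0 :=
  ciInf_le (Set.Finite.bddBelow (Set.finite_range _)) i

lemma acsP_nonneg {m : ℕ} (C : Matrix (Fin m) (Fin m) ℂ) : 0 ≤ acsP C := by
  refine le_ciInf fun i => add_nonneg (by positivity) ?_
  by_cases h : (i : ℕ) < m
  · rw [dif_pos h]; exact sv_nonneg C _
  · rw [dif_neg h]

lemma acsP_le_one {m : ℕ} (hm : 0 < m) (C : Matrix (Fin m) (Fin m) ℂ) : acsP C ≤ 1 := by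
  have h := acsP_le C (Fin.last m)
  rw [Fin.val_last, dif_neg (lt_irrefl m)] at h
  rw [div_self (by exact_mod_cast hm.ne' : (m : ℝ) ≠ 0), add_zero] at h
  exact h

end AuxACS
end AuxACS

open AuxACS

theorem acs_modulus_restriction (N r : ℕ) (hr : 0 < r)
    (φ : Fin r → Fin N) (hφ : StrictMono φ)
    (A B : Matrix (Fin N) (Fin N) ℂ) :
    acsP (A - B) ≥ ((r : ℝ) / N) * acsP (Rop N r φ A - Rop N r φ B) := by
  have hφinj : Function.Injective φ := hφ.injective
  have hrN : r ≤ N := by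
    have := Fintype.card_le_of_injective φ hφinj
    simpa using this
  have hN : 0 < N := lt_of_lt_of_le hr hrN
  have hRsub : Rop N r φ A - Rop N r φ B = Pmat N r φ * (A - B) * (Pmat N r φ)ᵀ := by
    unfold Rop
    rw [Matrix.mul_sub, Matrix.sub_mul]
  rw [ge_iff_le, hRsub]
  set C := A - B with hC
  set C' := Pmat N r φ * C * (Pmat N r φ)ᵀ with hC'
  have hq : 0 ≤ (r : ℝ) / N := by positivity
  refine le_ciInf fun i => ?_
  by_cases hir : (i : ℕ) < r
  · have hiN : (i : ℕ) < N := lt_of_lt_of_le hir hrN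
    rw [dif_pos hiN]
    have h1 : acsP C' ≤ ((i : ℕ) : ℝ) / r + sv C' ⟨(i : ℕ), hir⟩ := by
      have h := acsP_le C' ⟨(i : ℕ), by omega⟩
      rwa [dif_pos hir] at h
    have h2 : ((r : ℝ) / N) * acsP C' ≤ ((r : ℝ) / N) * (((i : ℕ) : ℝ) / r + sv C' ⟨(i : ℕ), hir⟩) :=
      mul_le_mul_of_nonneg_left h1 hq
    have h3 : ((r : ℝ) / N) * (((i : ℕ) : ℝ) / r + sv C' ⟨(i : ℕ), hir⟩)
        = ((i : ℕ) : ℝ) / N + ((r : ℝ) / N) * sv C' ⟨(i : ℕ), hir⟩ := by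
      have hr0 : (r : ℝ) ≠ 0 := by exact_mod_cast hr.ne'
      have hN0 : (N : ℝ) ≠ 0 := by exact_mod_cast hN.ne'
      field_simp
    have h4 : ((r : ℝ) / N) * sv C' ⟨(i : ℕ), hir⟩ ≤ sv C' ⟨(i : ℕ), hir⟩ := by
      refine mul_le_of_le_one_left (sv_nonneg _ _) ?_
      rw [div_le_one (by exact_mod_cast hN)]
      exact_mod_cast hrN
    have h5 : sv C' ⟨(i : ℕ), hir⟩ ≤ sv C ⟨(i : ℕ), hiN⟩ :=
      sv_restrict_le φ hφinj C (i : ℕ) hir hiN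
    linarith
  · have hterm : (0 : ℝ) ≤ if h : (i : ℕ) < N then sv C ⟨(i : ℕ), h⟩ else 0 := by
      by_cases h : (i : ℕ) < N
      · rw [dif_pos h]; exact sv_nonneg _ _
      · rw [dif_neg h]
    have h1 : ((r : ℝ) / N) * acsP C' ≤ (r : ℝ) / N := by
      calc ((r : ℝ) / N) * acsP C' ≤ ((r : ℝ) / N) * 1 :=
            mul_le_mul_of_nonneg_left (acsP_le_one hr C') hq
        _ = (r : ℝ) / N := mul_one _
    have h2 : (r : ℝ) / N ≤ ((i : ℕ) : ℝ) / N := by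
      have : (r : ℝ) ≤ ((i : ℕ) : ℝ) := by exact_mod_cast Nat.le_of_not_lt hir
      exact div_le_div_of_nonneg_right this (by positivity)
    calc ((r : ℝ) / N) * acsP C' ≤ (r : ℝ) / N := h1
      _ ≤ ((i : ℕ) : ℝ) / N := h2
      _ ≤ _ := le_add_of_nonneg_right hterm
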